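/- arXiv:1607.07173 — 6 statements merged into one kernel-verified Lean document; each statement's English description precedes it below -/
import Mathlib

section
/- For any S_1, S_2 ⊆ K^n: dim(S_1 ∪ S_2) = max(dim S_1, dim S_2). -/
open FirstOrder MvPolynomial

universe u

/-- `DiffPoly K n` is the ring of differential polynomials `K{Y_1,…,Y_n}`:
the polynomial ring over `K` in the indeterminates `Y_j^(r)` (`j : Fin n`, `r : ℕ`). -/
abbrev DiffPoly (K : Type u) [CommSemiring K] (n : ℕ) : Type u :=
  MvPolynomial (Fin n × ℕ) K

/-- The jet of a point `y ∈ K^n` with respect to a derivation `δ`: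
`Y_j^(r) ↦ δ^r (y_j)`. -/
def jet {K : Type u} (δ : K → K) {n : ℕ} (y : Fin n → K) : Fin n × ℕ → K :=
  fun jr => δ^[jr.2] (y jr.1)

/-- Evaluation `P(y)` of a differential polynomial at a point `y ∈ K^n`. -/
noncomputable def deval {K : Type u} [CommSemiring K] (δ : K → K) {n : ℕ}
    (y : Fin n → K) (P : DiffPoly K n) : K :=
  MvPolynomial.eval (jet δ y) P

/-- `P_1,…,P_m` are d-algebraically independent on `S ⊆ K^n`: there is no nonzero
`F ∈ K{X_1,…,X_m}` with `F(P_1(y),…,P_m(y)) = 0` for all `y ∈ S`. -/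
def DAlgIndepOn {K : Type u} [CommSemiring K] (δ : K → K) {n m : ℕ}
    (S : Set (Fin n → K)) (P : Fin m → DiffPoly K n) : Prop :=
  ¬ ∃ F : DiffPoly K m, F ≠ 0 ∧ ∀ y ∈ S, deval δ (fun i => deval δ y (P i)) F = 0

/-- The differential-algebraic dimension of `S ⊆ K^n`: the largest `m` for which some
`P_1,…,P_m ∈ K{Y_1,…,Y_n}` are d-algebraically independent on `S`, with `dim ∅ = ⊥ = -∞`. -/
noncomputable def ddim {K : Type u} [CommSemiring K] (δ : K → K) {n : ℕ}
    (S : Set (Fin n → K)) : WithBot ℕ∞ :=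
  sSup {d : WithBot ℕ∞ | S.Nonempty ∧
    ∃ m : ℕ, d = ((m : ℕ∞) : WithBot ℕ∞) ∧ ∃ P : Fin m → DiffPoly K n, DAlgIndepOn δ S P}

/-- The first-order language of differential rings `{0, 1, +, −, ·, δ}`. -/
def dLang : FirstOrder.Language where
  Functions := fun n => match n with
    | 0 => Fin 2
    | 1 => Fin 2
    | 2 => Fin 2
    | _ => Empty
  Relations := fun _ => Empty

/-- The differential ring `(K, δ)` as a structure for the language of differential rings. -/
noncomputable def dStructure {K : Type u} [Field K] (δ : K → K) : dLang.Structure K where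
  funMap := fun {n} f v => match n, f with
    | 0, ⟨0, _⟩ => 0
    | 0, ⟨_+1, _⟩ => 1
    | 1, ⟨0, _⟩ => -(v 0)
    | 1, ⟨_+1, _⟩ => δ (v 0)
    | 2, ⟨0, _⟩ => v 0 + v 1
    | 2, ⟨_+1, _⟩ => v 0 * v 1
    | (_+3), f => f.elim
  RelMap := fun {_} r _ => r.elim

/-- `S ⊆ K^α` is definable (with parameters from `K`) in the differential field `(K, δ)`,
viewed as a first-order structure in the language of differential rings. -/
def DefinableK {K : Type u} [Field K] (δ : K → K) {α : Type} (S : Set (α → K)) : Prop :=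
  ∃ (k : ℕ) (φ : dLang.Formula (α ⊕ Fin k)) (p : Fin k → K),
    S = {y | @FirstOrder.Language.Formula.Realize dLang K (dStructure δ) _ φ (Sum.elim y p)}

/-- A differential field extension of the differential field `(K, δ)`. -/
structure DiffFieldExt (K : Type u) [Field K] (δ : K → K) : Type (u+1) where
  L : Type u
  [fieldL : Field L]
  derL : L → L
  derL_add : ∀ a b : L, derL (a + b) = derL a + derL b
  derL_mul : ∀ a b : L, derL (a * b) = derL a * b + a * derL b
  emb : K →+* L
  emb_der : ∀ a : K, derL (emb a) = emb (δ a)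

attribute [instance] DiffFieldExt.fieldL

/-- Evaluation `P(y)` (as a ring morphism) of differential polynomials over `K` at a
point `y` of a differential field extension: `Y_j^(r) ↦ derL^r (y_j)`. -/
noncomputable def devalExtHom {K : Type u} [Field K] {δ : K → K} (E : DiffFieldExt K δ)
    {n : ℕ} (y : Fin n → E.L) : DiffPoly K n →+* E.L :=
  MvPolynomial.eval₂Hom E.emb (fun jr => E.derL^[jr.2] (y jr.1))

/-- Evaluation `P(y)` of a differential polynomial over `K` at a point of an extension. -/
noncomputable def devalExt {K : Type u} [Field K] {δ : K → K} (E : DiffFieldExt K δ)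
    {n : ℕ} (y : Fin n → E.L) (P : DiffPoly K n) : E.L :=
  devalExtHom E y P

/-- Elements `a_1,…,a_m` of a differential field extension of `K` are d-algebraically
independent over `K`. -/
def DAlgIndepTuple {K : Type u} [Field K] {δ : K → K} (E : DiffFieldExt K δ)
    {m : ℕ} (a : Fin m → E.L) : Prop :=
  ¬ ∃ F : DiffPoly K m, F ≠ 0 ∧ devalExt E a F = 0

/-- `P` has order at most `r⃗ = rv`, i.e. `P ∈ K[Y_j^(r) : r ≤ rv j]`. -/
def orderAtMost {K : Type u} [CommSemiring K] {n : ℕ} (rv : Fin n → ℕ)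
    (P : DiffPoly K n) : Prop :=
  P ∈ MvPolynomial.supported K {jr : Fin n × ℕ | jr.2 ≤ rv jr.1}

/-- `P_1,…,P_m` are strongly d-independent at `y`: for some `r⃗` bounding the orders of the
`P_i`, the `m × n` matrix with entries `(∂P_i/∂Y_j^(rv j))(y)` has rank `m`. -/
noncomputable def StrongDIndepAt {K : Type u} [Field K] {δ : K → K} (E : DiffFieldExt K δ)
    {n m : ℕ} (y : Fin n → E.L) (P : Fin m → DiffPoly K n) : Prop :=
  ∃ rv : Fin n → ℕ, (∀ i, orderAtMost rv (P i)) ∧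
    (Matrix.of fun (i : Fin m) (j : Fin n) =>
      devalExt E y (MvPolynomial.pderiv (j, rv j) (P i))).rank = m

/-- `P_1,…,P_m` are d-independent at `y` (with `𝔭 = {P : P(y) = 0}`): the images of the
Kähler differentials `d(∂^r P_i)` in `Ω_{R|K}/𝔭·Ω_{R|K}` are linearly independent over
`R/𝔭`, where `R = K{Y_1,…,Y_n}` and `derR` is the derivation of `R`. -/
def DIndepAt {K : Type u} [Field K] {n : ℕ} (derR : DiffPoly K n → DiffPoly K n)
    (p : Ideal (DiffPoly K n)) {m : ℕ} (P : Fin m → DiffPoly K n) : Prop :=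
  ∀ a : (Fin m × ℕ) →₀ DiffPoly K n,
    (a.sum fun ir c => c • (KaehlerDifferential.D K (DiffPoly K n)) (derR^[ir.2] (P ir.1)))
        ∈ p • (⊤ : Submodule (DiffPoly K n) (KaehlerDifferential K (DiffPoly K n))) →
    ∀ ir : Fin m × ℕ, a ir ∈ p

/-- A Kolchin closed subset of `K^n`: the common zero set of finitely many
differential polynomials. -/
def KolchinClosed {K : Type u} [CommSemiring K] (δ : K → K) {n : ℕ}
    (T : Set (Fin n → K)) : Prop :=
  ∃ (m : ℕ) (Ps : Fin m → DiffPoly K n), T = {y | ∀ i, deval δ y (Ps i) = 0}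

/-- The Kolchin closure of `S ⊆ K^n`: the intersection of all Kolchin closed supersets. -/
def kolchinClosure {K : Type u} [CommSemiring K] (δ : K → K) {n : ℕ}
    (S : Set (Fin n → K)) : Set (Fin n → K) :=
  ⋂₀ {T | KolchinClosed δ T ∧ S ⊆ T}

/-- An elementary extension of the differential field `(K, δ)` in the language of
differential rings. -/
structure DiffElemExt (K : Type u) [Field K] (δ : K → K) : Type (u+1) where
  L : Type u
  [fieldL : Field L]
  derL : L → L
  derL_add : ∀ a b : L, derL (a + b) = derL a + derL b
  derL_mul : ∀ a b : L, derL (a * b) = derL a * b + a * derL b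
  emb : K →+* L
  emb_der : ∀ a : K, derL (emb a) = emb (δ a)
  elementary : ∀ {k : ℕ} (φ : dLang.Formula (Fin k)) (v : Fin k → K),
    @FirstOrder.Language.Formula.Realize dLang L (dStructure derL) _ φ (⇑emb ∘ v) ↔
    @FirstOrder.Language.Formula.Realize dLang K (dStructure δ) _ φ v

attribute [instance] DiffElemExt.fieldL

/-- Substituting `y ∈ K^n` for the first `n` differential indeterminates of
`P ∈ K{Y_1,…,Y_n,Z}` gives the differential polynomial `P(y,Z) ∈ K{Z}`. -/
noncomputable def partialLast {K : Type u} [CommSemiring K] (δ : K → K) {n : ℕ}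
    (y : Fin n → K) (P : DiffPoly K (n+1)) : DiffPoly K 1 :=
  MvPolynomial.eval₂ MvPolynomial.C (fun jr =>
    if h : (jr.1 : ℕ) < n then MvPolynomial.C (δ^[jr.2] (y ⟨jr.1, h⟩))
    else MvPolynomial.X ((0 : Fin 1), jr.2)) P

/-- The differential field `(K, δ)` is d-bounded. -/
def DBounded {K : Type u} [Field K] (δ : K → K) : Prop :=
  ∀ (n : ℕ) (S : Set (Fin (n+1) → K)), DefinableK δ S →
    ∃ (k : ℕ) (P : Fin k → DiffPoly K (n+1)),
      ∀ y : Fin n → K,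
        ddim δ {z : Fin 1 → K | Fin.snoc y (z 0) ∈ S} = ((0 : ℕ∞) : WithBot ℕ∞) →
        ∃ i : Fin k, partialLast δ y (P i) ≠ 0 ∧
          ∀ z : K, Fin.snoc y z ∈ S → deval δ (Fin.snoc y z) (P i) = 0

/-- d-algebraic independence passes from a subset to a superset. -/
lemma DAlgIndepOn.mono {K : Type u} [CommSemiring K] {δ : K → K} {n m : ℕ}
    {S T : Set (Fin n → K)} (hST : S ⊆ T) {P : Fin m → DiffPoly K n}
    (h : DAlgIndepOn δ S P) : DAlgIndepOn δ T P := by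
  rintro ⟨F, hF, hv⟩
  exact h ⟨F, hF, fun y hy => hv y (hST hy)⟩

/-- `dim (S₁ ∪ S₂) = max (dim S₁) (dim S₂)`. -/
theorem stmt3 {K : Type u} [Field K] [CharZero K] (δ : K → K)
    (hδadd : ∀ a b : K, δ (a + b) = δ a + δ b)
    (hδmul : ∀ a b : K, δ (a * b) = δ a * b + a * δ b)
    (hCK : ∃ a : K, δ a ≠ 0)
    {n : ℕ} (S₁ S₂ : Set (Fin n → K)) :
    ddim δ (S₁ ∪ S₂) = max (ddim δ S₁) (ddim δ S₂) := by
  have key :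
      {d : WithBot ℕ∞ | (S₁ ∪ S₂).Nonempty ∧ ∃ m : ℕ, d = ((m : ℕ∞) : WithBot ℕ∞) ∧
          ∃ P : Fin m → DiffPoly K n, DAlgIndepOn δ (S₁ ∪ S₂) P}
        = {d : WithBot ℕ∞ | S₁.Nonempty ∧ ∃ m : ℕ, d = ((m : ℕ∞) : WithBot ℕ∞) ∧
            ∃ P : Fin m → DiffPoly K n, DAlgIndepOn δ S₁ P}
        ∪ {d : WithBot ℕ∞ | S₂.Nonempty ∧ ∃ m : ℕ, d = ((m : ℕ∞) : WithBot ℕ∞) ∧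
            ∃ P : Fin m → DiffPoly K n, DAlgIndepOn δ S₂ P} := by
    ext d
    constructor
    · rintro ⟨hne, m, rfl, P, hP⟩
      by_cases h1 : S₁.Nonempty ∧ DAlgIndepOn δ S₁ P
      · exact Or.inl ⟨h1.1, m, rfl, P, h1.2⟩
      · right
        rcases Set.eq_empty_or_nonempty S₁ with hS₁ | hS₁
        · subst hS₁
          rw [Set.empty_union] at hne hP
          exact ⟨hne, m, rfl, P, hP⟩
        · have h2 : ¬ DAlgIndepOn δ S₁ P := fun h => h1 ⟨hS₁, h⟩
          rw [DAlgIndepOn, not_not] at h2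
          obtain ⟨F₁, hF₁, hv₁⟩ := h2
          refine ⟨?_, m, rfl, P, ?_⟩
          · rcases Set.eq_empty_or_nonempty S₂ with hS₂ | hS₂
            · exfalso
              subst hS₂
              rw [Set.union_empty] at hP
              exact hP ⟨F₁, hF₁, hv₁⟩
            · exact hS₂
          · rintro ⟨F₂, hF₂, hv₂⟩
            refine hP ⟨F₁ * F₂, mul_ne_zero hF₁ hF₂, ?_⟩
            rintro y hy
            have hmul : deval δ (fun i => deval δ y (P i)) (F₁ * F₂)
                = deval δ (fun i => deval δ y (P i)) F₁
                  * deval δ (fun i => deval δ y (P i)) F₂ := by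
              simp [deval, map_mul]
            rw [hmul]
            rcases hy with hy | hy
            · rw [hv₁ y hy, zero_mul]
            · rw [hv₂ y hy, mul_zero]
    · rintro (⟨hne, m, rfl, P, hP⟩ | ⟨hne, m, rfl, P, hP⟩)
      · exact ⟨hne.mono Set.subset_union_left, m, rfl, P,
          hP.mono Set.subset_union_left⟩
      · exact ⟨hne.mono Set.subset_union_right, m, rfl, P,
          hP.mono Set.subset_union_right⟩
  simp only [ddim]
  rw [key, sSup_union]
end

section
/- Let y = (y_1,…,y_n) be a tuple of elements of a differential field extension of K, let d be the differential transcendence degree of K⟨y⟩ over K, and let 𝔭 := {P ∈ K{Y_1,…,Y_n} : P(y) = 0}. Then there exist P_1,…,P_{n−d} ∈ 𝔭 that are strongly d-independent at y. -/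
open FirstOrder MvPolynomial

universe u

open MvPolynomial

private lemma pderiv_as_sum {σ : Type*} {R : Type*} [CommSemiring R]
    (v : σ) (f : MvPolynomial σ R) :
    pderiv v f = ∑ m ∈ f.support,
      monomial (m - Finsupp.single v 1) (coeff m f * (m v : R)) := by
  conv_lhs => rw [f.as_sum]
  rw [map_sum]
  exact Finset.sum_congr rfl fun m _ => pderiv_monomial

private lemma support_pderiv {σ : Type*} {R : Type*} [CommSemiring R]
    (v : σ) (f : MvPolynomial σ R) {m : σ →₀ ℕ} (hm : m ∈ (pderiv v f).support) :
    ∃ m' ∈ f.support, m' v ≠ 0 ∧ m = m' - Finsupp.single v 1 := by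
  classical
  rw [MvPolynomial.mem_support_iff, pderiv_as_sum, MvPolynomial.coeff_sum] at hm
  obtain ⟨m', hm', hne⟩ := Finset.exists_ne_zero_of_sum_ne_zero hm
  rw [MvPolynomial.coeff_monomial] at hne
  split_ifs at hne with h
  · refine ⟨m', hm', ?_, h.symm⟩
    intro h0
    apply hne
    rw [h0]
    simp
  · exact absurd rfl hne

private lemma vars_pderiv_subset {σ : Type*} {R : Type*} [CommSemiring R]
    (v : σ) (f : MvPolynomial σ R) : (pderiv v f).vars ⊆ f.vars := by
  classical
  intro u hu
  rw [MvPolynomial.mem_vars] at hu ⊢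
  obtain ⟨m, hm, hum⟩ := hu
  obtain ⟨m', hm', -, rfl⟩ := support_pderiv v f hm
  refine ⟨m', hm', ?_⟩
  rw [Finsupp.mem_support_iff] at hum ⊢
  intro h0
  apply hum
  rw [Finsupp.tsub_apply, h0]
  simp

private lemma degreeOf_pderiv_lt {σ : Type*} {R : Type*} [CommSemiring R]
    (v : σ) (f : MvPolynomial σ R) (h : MvPolynomial.degreeOf v f ≠ 0) :
    MvPolynomial.degreeOf v (pderiv v f) < MvPolynomial.degreeOf v f := by
  rw [MvPolynomial.degreeOf_lt_iff (Nat.pos_of_ne_zero h)]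
  intro m hm
  obtain ⟨m', hm', hv', rfl⟩ := support_pderiv v f hm
  have hle := MvPolynomial.monomial_le_degreeOf v hm'
  rw [Finsupp.tsub_apply, Finsupp.single_eq_same]
  omega

private lemma pderiv_ne_zero' {σ : Type*} {R : Type*} [Field R] [CharZero R]
    (v : σ) (f : MvPolynomial σ R) (h : MvPolynomial.degreeOf v f ≠ 0) :
    pderiv v f ≠ 0 := by
  classical
  have hf : f ≠ 0 := by rintro rfl; simp at h
  obtain ⟨m, hm, hsup⟩ := Finset.exists_mem_eq_sup f.support
    (MvPolynomial.support_nonempty.mpr hf) (fun m => m v)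
  have hmv : m v = MvPolynomial.degreeOf v f := by
    rw [MvPolynomial.degreeOf_eq_sup]; exact hsup.symm
  have hmv0 : m v ≠ 0 := by rw [hmv]; exact h
  intro h0
  have hc : MvPolynomial.coeff (m - Finsupp.single v 1) (pderiv v f) = 0 := by rw [h0]; simp
  rw [pderiv_as_sum, MvPolynomial.coeff_sum, Finset.sum_eq_single_of_mem m hm] at hc
  · rw [MvPolynomial.coeff_monomial, if_pos rfl] at hc
    rcases mul_eq_zero.mp hc with h1 | h2
    · exact (MvPolynomial.mem_support_iff.mp hm) h1
    · exact hmv0 (Nat.cast_eq_zero.mp h2)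
  · intro m' hm' hne
    rw [MvPolynomial.coeff_monomial]
    split_ifs with heq
    · rcases Nat.eq_zero_or_pos (m' v) with h0' | hpos
      · simp [h0']
      · exfalso
        apply hne
        ext u
        have hu := DFunLike.congr_fun heq u
        rw [Finsupp.tsub_apply, Finsupp.tsub_apply] at hu
        rcases eq_or_ne u v with rfl | huv
        · rw [Finsupp.single_eq_same] at hu; omega
        · rwa [Finsupp.single_eq_of_ne' (Ne.symm huv), Nat.sub_zero, Nat.sub_zero] at hu
    · rfl

private lemma devalExt_rename {K : Type u} [Field K] {δ : K → K} (E : DiffFieldExt K δ)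
    {n k : ℕ} (y : Fin n → E.L) (f : Fin k → Fin n) (F : DiffPoly K k) :
    devalExt E y (MvPolynomial.rename (Prod.map f id) F) = devalExt E (y ∘ f) F := by
  unfold devalExt devalExtHom
  rw [MvPolynomial.coe_eval₂Hom, MvPolynomial.coe_eval₂Hom, MvPolynomial.eval₂_rename]
  congr 1

private lemma keyLemma {K : Type u} [Field K] [CharZero K] {δ : K → K}
    (E : DiffFieldExt K δ) {n d : ℕ} (y : Fin n → E.L)
    (ι : Fin d → Fin n) (hι : StrictMono ι) (hind : DAlgIndepTuple E (y ∘ ι))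
    (hd2 : ¬ ∃ ι' : Fin (d + 1) → Fin n, StrictMono ι' ∧ DAlgIndepTuple E (y ∘ ι'))
    (j : Fin n) (hj : j ∉ Set.range ι) :
    ∃ (Q : DiffPoly K n) (r0 : ℕ),
      devalExtHom E y Q = 0 ∧
      (∀ v ∈ Q.vars, v.1 = j ∨ v.1 ∈ Set.range ι) ∧
      (∀ v ∈ Q.vars, v.1 = j → v.2 ≤ r0) ∧
      devalExt E y (MvPolynomial.pderiv (j, r0) Q) ≠ 0 := by
  classical
  have hjim : j ∉ Finset.image ι Finset.univ := by
    simp only [Finset.mem_image, Finset.mem_univ, true_and]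
    rintro ⟨i, rfl⟩
    exact hj ⟨i, rfl⟩
  have hcard' : (insert j (Finset.image ι Finset.univ)).card = d + 1 := by
    rw [Finset.card_insert_of_notMem hjim, Finset.card_image_of_injective _ hι.injective,
      Finset.card_univ, Fintype.card_fin]
  set ιe := Finset.orderEmbOfFin _ hcard' with hιe
  have hrange : Set.range ⇑ιe = insert j (Set.range ι) := by
    rw [hιe, Finset.range_orderEmbOfFin, Finset.coe_insert, Finset.coe_image, Finset.coe_univ,
      Set.image_univ]
  obtain ⟨t, htj⟩ : ∃ t, ιe t = j := by
    have : j ∈ Set.range ⇑ιe := by rw [hrange]; exact Set.mem_insert _ _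
    exact this
  have hcomp : ι = ⇑ιe ∘ t.succAbove := by
    have h1 : StrictMono (⇑ιe ∘ t.succAbove) := ιe.strictMono.comp (Fin.strictMono_succAbove t)
    have hre : Set.range ι = Set.range (⇑ιe ∘ t.succAbove) := by
      rw [Set.range_comp, Fin.range_succAbove, Set.compl_eq_univ_diff,
        Set.image_diff ιe.injective, Set.image_univ, Set.image_singleton, htj, hrange,
        Set.insert_diff_self_of_notMem hj]
    haveI := Finite.to_wellFoundedLT (α := Fin d)
    exact (hι.range_inj h1).mp hre
  have hnotind : ¬ DAlgIndepTuple E (y ∘ ⇑ιe) := fun h => hd2 ⟨⇑ιe, ιe.strictMono, h⟩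
  unfold DAlgIndepTuple at hnotind
  rw [not_not] at hnotind
  obtain ⟨F0, hF00, hF0v⟩ := hnotind
  -- any nonzero vanishing polynomial must involve the variable block `t`
  have noT : ∀ G : DiffPoly K (d + 1), G ≠ 0 → devalExt E (y ∘ ⇑ιe) G = 0 →
      ∃ s : ℕ, ((t, s) : Fin (d + 1) × ℕ) ∈ G.vars := by
    intro G hG hGv
    by_contra hno
    push_neg at hno
    have hsub : ↑G.vars ⊆ Set.range (Prod.map t.succAbove (id : ℕ → ℕ)) := by
      rintro ⟨i, s⟩ hv
      have hi : i ≠ t := by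
        rintro rfl
        exact hno s (Finset.mem_coe.mp hv)
      obtain ⟨i', hi'⟩ : i ∈ Set.range t.succAbove := by
        rw [Fin.range_succAbove]; exact hi
      exact ⟨(i', s), by simp [Prod.map, hi']⟩
    obtain ⟨H, hH⟩ := MvPolynomial.exists_rename_eq_of_vars_subset_range G _
      (Function.Injective.prodMap (Fin.succAbove_right_injective) Function.injective_id) hsub
    apply hind
    refine ⟨H, ?_, ?_⟩
    · rintro rfl
      rw [map_zero] at hH
      exact hG hH.symm
    · calc devalExt E (y ∘ ι) H = devalExt E ((y ∘ ⇑ιe) ∘ t.succAbove) H := by rw [hcomp]; rfl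
        _ = devalExt E (y ∘ ⇑ιe) G := by rw [← hH, devalExt_rename]
        _ = 0 := hGv
  set val : DiffPoly K (d + 1) → E.L := devalExt E (y ∘ ⇑ιe) with hvaldef
  set A : Set (DiffPoly K (d + 1)) := {G | G ≠ 0 ∧ val G = 0} with hA
  set ordT : DiffPoly K (d + 1) → ℕ :=
    fun G => (G.vars.filter (fun v => v.1 = t)).sup Prod.snd with hordT
  have hF0A : F0 ∈ A := ⟨hF00, hF0v⟩
  have hRne : {r | ∃ G ∈ A, ordT G = r}.Nonempty := ⟨ordT F0, F0, hF0A, rfl⟩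
  set r0 := sInf {r | ∃ G ∈ A, ordT G = r} with hr0def
  obtain ⟨G1, hG1A, hG1⟩ := Nat.sInf_mem hRne
  have hKne : {k | ∃ G ∈ A, ordT G = r0 ∧ MvPolynomial.degreeOf (t, r0) G = k}.Nonempty :=
    ⟨_, G1, hG1A, hG1, rfl⟩
  set k0 := sInf {k | ∃ G ∈ A, ordT G = r0 ∧ MvPolynomial.degreeOf (t, r0) G = k} with hk0def
  obtain ⟨F, hFA, hFord, hFdeg⟩ := Nat.sInf_mem hKne
  obtain ⟨s1, hs1⟩ := noT F hFA.1 hFA.2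
  have hVne : (F.vars.filter (fun v => v.1 = t)).Nonempty :=
    ⟨(t, s1), Finset.mem_filter.mpr ⟨hs1, rfl⟩⟩
  obtain ⟨⟨v1, v2⟩, hvmax, hvsup⟩ := Finset.exists_mem_eq_sup _ hVne Prod.snd
  obtain ⟨hvmem, hv1⟩ := Finset.mem_filter.mp hvmax
  have hv2 : v2 = r0 := by rw [← hFord, hordT]; exact hvsup.symm
  have htr0 : ((t, r0) : Fin (d + 1) × ℕ) ∈ F.vars := by
    rw [← hv1, ← hv2]; exact hvmem
  have hk0 : MvPolynomial.degreeOf ((t, r0) : Fin (d + 1) × ℕ) F ≠ 0 := by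
    intro h0
    rw [MvPolynomial.mem_vars] at htr0
    obtain ⟨mm, hmm, hmem⟩ := htr0
    have h1 := MvPolynomial.monomial_le_degreeOf ((t, r0) : Fin (d + 1) × ℕ) hmm
    rw [h0] at h1
    exact Finsupp.mem_support_iff.mp hmem (Nat.le_zero.mp h1)
  set S := MvPolynomial.pderiv ((t, r0) : Fin (d + 1) × ℕ) F with hSdef
  have hSne : S ≠ 0 := pderiv_ne_zero' _ _ hk0
  have hSval : val S ≠ 0 := by
    intro hv0
    have hSA : S ∈ A := ⟨hSne, hv0⟩
    have hord_le : ordT S ≤ r0 := by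
      refine Finset.sup_le ?_
      intro v hv
      rw [Finset.mem_filter] at hv
      have hvF : v ∈ F.vars := vars_pderiv_subset _ _ hv.1
      rw [← hFord, hordT]
      exact Finset.le_sup (Finset.mem_filter.mpr ⟨hvF, hv.2⟩)
    have hord_ge : r0 ≤ ordT S := Nat.sInf_le ⟨S, hSA, rfl⟩
    have hordeq : ordT S = r0 := le_antisymm hord_le hord_ge
    have hk_le : k0 ≤ MvPolynomial.degreeOf (t, r0) S := Nat.sInf_le ⟨S, hSA, hordeq, rfl⟩
    have hk_lt : MvPolynomial.degreeOf ((t, r0) : Fin (d + 1) × ℕ) S <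
        MvPolynomial.degreeOf ((t, r0) : Fin (d + 1) × ℕ) F := degreeOf_pderiv_lt _ _ hk0
    rw [hFdeg] at hk_lt
    omega
  have hinj : Function.Injective (Prod.map ⇑ιe (id : ℕ → ℕ)) :=
    Function.Injective.prodMap ιe.injective Function.injective_id
  refine ⟨MvPolynomial.rename (Prod.map ⇑ιe id) F, r0, ?_, ?_, ?_, ?_⟩
  · show devalExt E y (MvPolynomial.rename (Prod.map ⇑ιe id) F) = 0
    rw [devalExt_rename]
    exact hFA.2
  · intro v hv
    obtain ⟨w, hw, hwv⟩ := Finset.mem_image.mp (MvPolynomial.vars_rename _ F hv)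
    have hmem : v.1 ∈ Set.range ⇑ιe := ⟨w.1, by rw [← hwv, Prod.map_fst]⟩
    rw [hrange] at hmem
    exact hmem
  · intro v hv hvj
    obtain ⟨w, hw, hwv⟩ := Finset.mem_image.mp (MvPolynomial.vars_rename _ F hv)
    rw [← hwv, Prod.map_fst] at hvj
    have hwt : w.1 = t := ιe.injective (by rw [htj]; exact hvj)
    have hle : w.2 ≤ ordT F := by
      rw [hordT]
      exact Finset.le_sup (Finset.mem_filter.mpr ⟨hw, hwt⟩)
    have hv2' : v.2 = w.2 := by rw [← hwv, Prod.map_snd, id_eq]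
    rw [hv2', hFord] at *
    omega
  · have h2 : ((j, r0) : Fin n × ℕ) = Prod.map ⇑ιe id ((t, r0) : Fin (d + 1) × ℕ) := by
      simp [Prod.map, htj]
    rw [h2, MvPolynomial.pderiv_rename hinj, devalExt_rename]
    exact hSval

/-- If `d` is the differential transcendence degree of `K⟨y⟩` over `K`, then there are
`n - d` differential polynomials vanishing at `y` that are strongly d-independent at `y`. -/
theorem stmt8 {K : Type u} [Field K] [CharZero K] (δ : K → K)
    (hδadd : ∀ a b : K, δ (a + b) = δ a + δ b)
    (hδmul : ∀ a b : K, δ (a * b) = δ a * b + a * δ b)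
    (E : DiffFieldExt K δ) {n : ℕ} (y : Fin n → E.L) (d : ℕ)
    (hd1 : ∃ ι : Fin d → Fin n, StrictMono ι ∧ DAlgIndepTuple E (y ∘ ι))
    (hd2 : ¬ ∃ ι : Fin (d + 1) → Fin n, StrictMono ι ∧ DAlgIndepTuple E (y ∘ ι)) :
    ∃ P : Fin (n - d) → DiffPoly K n,
      (∀ i, P i ∈ RingHom.ker (devalExtHom E y)) ∧ StrongDIndepAt E y P := by

  classical
  obtain ⟨ι, hι, hind⟩ := hd1
  set m := n - d with hm
  have hcard : (Finset.image ι Finset.univ)ᶜ.card = m := by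
    rw [Finset.card_compl, Finset.card_image_of_injective _ hι.injective, Finset.card_univ]
    simp [hm]
  set κe := Finset.orderEmbOfFin _ hcard with hκe
  have hκmem : ∀ a, κe a ∉ Set.range ι := by
    intro a
    have hmem := Finset.orderEmbOfFin_mem _ hcard a
    rw [Finset.mem_compl, Finset.mem_image] at hmem
    rintro ⟨i, hi⟩
    exact hmem ⟨i, Finset.mem_univ i, hi⟩
  choose Q r0 hQ0 hQvars hQord hQd using
    fun a : Fin m => keyLemma E y ι hι hind hd2 (κe a) (hκmem a)
  set Rbig := (Finset.univ.sup fun a : Fin m => (Q a).vars.sup Prod.snd) + 1 with hRbig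
  set rv : Fin n → ℕ := fun j => if h : ∃ a, κe a = j then r0 h.choose else Rbig with hrv
  have hrvκ : ∀ a, rv (κe a) = r0 a := by
    intro a
    have hex : ∃ a', κe a' = κe a := ⟨a, rfl⟩
    have hch : hex.choose = a := κe.injective hex.choose_spec
    simp only [hrv]
    rw [dif_pos hex, hch]
  have hrvι : ∀ j, j ∈ Set.range ι → rv j = Rbig := by
    intro j hj
    have hnex : ¬ ∃ a, κe a = j := by
      rintro ⟨a, rfl⟩
      exact hκmem a hj
    simp only [hrv]
    rw [dif_neg hnex]
  have hpart : ∀ j : Fin n, j ∈ Set.range ι ∨ ∃ a, κe a = j := by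
    intro j
    by_cases hj : j ∈ Finset.image ι Finset.univ
    · left
      obtain ⟨i, -, rfl⟩ := Finset.mem_image.mp hj
      exact ⟨i, rfl⟩
    · right
      have : j ∈ Set.range ⇑κe := by
        rw [hκe, Finset.range_orderEmbOfFin]
        exact Finset.mem_coe.mpr (Finset.mem_compl.mpr hj)
      exact this
  have hvarbound : ∀ a, ∀ v ∈ (Q a).vars, v.2 < Rbig := by
    intro a v hv
    have h1 : v.2 ≤ (Q a).vars.sup Prod.snd := Finset.le_sup hv
    have h2 : (Q a).vars.sup Prod.snd ≤ Finset.univ.sup fun a : Fin m => (Q a).vars.sup Prod.snd :=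
      Finset.le_sup (f := fun a : Fin m => (Q a).vars.sup Prod.snd) (Finset.mem_univ a)
    omega
  refine ⟨Q, fun a => RingHom.mem_ker.mpr (hQ0 a), rv, ?_, ?_⟩
  · -- order bound
    intro a
    show Q a ∈ MvPolynomial.supported K {jr : Fin n × ℕ | jr.2 ≤ rv jr.1}
    rw [MvPolynomial.mem_supported]
    intro v hv
    have hv' : v ∈ (Q a).vars := Finset.mem_coe.mp hv
    simp only [Set.mem_setOf_eq]
    rcases hQvars a v hv' with hvj | hvι
    · rw [hvj, hrvκ]
      exact hQord a v hv' hvj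
    · rw [hrvι _ hvι]
      exact le_of_lt (hvarbound a v hv')
  · -- rank
    set M : Matrix (Fin m) (Fin n) E.L := Matrix.of fun (a : Fin m) (j : Fin n) =>
      devalExt E y (MvPolynomial.pderiv (j, rv j) (Q a)) with hMdef
    have hdiag : ∀ a, M a (κe a) ≠ 0 := by
      intro a
      show devalExt E y (MvPolynomial.pderiv (κe a, rv (κe a)) (Q a)) ≠ 0
      rw [hrvκ a]
      exact hQd a
    have hoff : ∀ a j, j ≠ κe a → M a j = 0 := by
      intro a j hne
      have hnotvar : ((j, rv j) : Fin n × ℕ) ∉ (Q a).vars := by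
        intro hmem
        rcases hQvars a _ hmem with h1 | h2
        · exact hne h1
        · have hlt := hvarbound a _ hmem
          rw [hrvι j h2] at hlt
          exact lt_irrefl _ hlt
      show devalExt E y (MvPolynomial.pderiv (j, rv j) (Q a)) = 0
      rw [MvPolynomial.pderiv_eq_zero_of_notMem_vars hnotvar]
      exact map_zero (devalExtHom E y)
    have hsurj : Function.Surjective (Matrix.mulVecLin M) := by
      intro v
      refine ⟨fun j => if h : ∃ a, κe a = j then v h.choose / M h.choose j else 0, ?_⟩
      funext a
      rw [Matrix.mulVecLin_apply]
      show ∑ j, M a j * _ = v a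
      rw [Finset.sum_eq_single (κe a)]
      · have hex : ∃ a', κe a' = κe a := ⟨a, rfl⟩
        have hch : hex.choose = a := κe.injective hex.choose_spec
        rw [dif_pos hex, hch, mul_comm, div_mul_cancel₀ _ (hdiag a)]
      · intro j hjmem hne
        rcases hpart j with h1 | h2
        · have hnex : ¬ ∃ a', κe a' = j := by
            rintro ⟨a', rfl⟩
            exact hκmem a' h1
          rw [dif_neg hnex, mul_zero]
        · obtain ⟨a', rfl⟩ := h2
          rw [hoff a _ hne, zero_mul]
      · intro habs
        exact absurd (Finset.mem_univ _) habs
    have hrange : LinearMap.range (Matrix.mulVecLin M) = ⊤ := LinearMap.range_eq_top.mpr hsurj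
    show M.rank = m
    rw [Matrix.rank, hrange, finrank_top, Module.finrank_fin_fun]
end

section
/- Let F, G ∈ C[Y] be nonzero polynomials, c ∈ C a nonzero constant, and R = R_1/R_2 a nonzero rational function over C (R_1, R_2 ∈ C[Y] nonzero) such that F/G = c·(∂R/∂Y)/R in C(Y). Let b ∈ K, b ≠ 0, satisfy b'/b = 1/c. Then for every y ∈ K with G(y) ≠ 0, R_1(y) ≠ 0, R_2(y) ≠ 0, and F(y)·y' = G(y), the element R(y)/b is a constant, i.e., R(y) ∈ C^×·b. -/
open FirstOrder MvPolynomial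

universe u

section Aux

variable {K : Type u} [Field K] (δ : K → K)
    (hδadd : ∀ a b : K, δ (a + b) = δ a + δ b)
    (hδmul : ∀ a b : K, δ (a * b) = δ a * b + a * δ b)

include hδadd hδmul

lemma der_zero : δ 0 = 0 := by
  have h := hδadd 0 0
  simp only [add_zero, left_eq_add] at h
  exact h

lemma der_one : δ 1 = 0 := by
  have h := hδmul 1 1
  simp only [mul_one, one_mul, left_eq_add] at h
  exact h

lemma der_pow (y : K) (n : ℕ) : δ (y ^ n) = n * y ^ (n - 1) * δ y := by
  induction n with
  | zero => simp [der_one δ hδadd hδmul]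
  | succ n ih =>
    rw [pow_succ, hδmul, ih]
    rcases Nat.eq_zero_or_pos n with rfl | hn
    · simp [der_one δ hδadd hδmul]
    · have h : y ^ (n - 1) * y = y ^ n := by
        rw [← pow_succ, Nat.sub_add_cancel hn]
      push_cast [Nat.add_sub_cancel]
      linear_combination (n : K) * δ y * h

lemma der_eval (P : Polynomial K) (hP : ∀ i, δ (P.coeff i) = 0) (y : K) :
    δ (P.eval y) = (Polynomial.derivative P).eval y * δ y := by
  have hD : Polynomial.derivative P =
      P.sum fun n a => Polynomial.C (a * n) * Polynomial.X ^ (n - 1) :=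
    Polynomial.derivative_apply P
  rw [Polynomial.eval_eq_sum, hD]
  unfold Polynomial.sum
  rw [Polynomial.eval_finset_sum]
  let D : K →+ K := AddMonoidHom.mk' δ hδadd
  have : δ (∑ i ∈ P.support, P.coeff i * y ^ i)
      = ∑ i ∈ P.support, δ (P.coeff i * y ^ i) := map_sum D _ _
  rw [this, Finset.sum_mul]
  refine Finset.sum_congr rfl fun i _ => ?_
  rw [hδmul, hP i, der_pow δ hδadd hδmul]
  simp
  ring

end Aux

/-- If `F/G = c·(∂R/∂Y)/R` in `C(Y)` (written with `R = R₁/R₂` and cross-multiplied) and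
`b ≠ 0` satisfies `b′/b = 1/c`, then for every `y` with `F(y)·y′ = G(y)` (and no vanishing
denominators) one has `R(y) ∈ C^× · b`. -/
theorem stmt14 {K : Type u} [Field K] [CharZero K] (δ : K → K)
    (hδadd : ∀ a b : K, δ (a + b) = δ a + δ b)
    (hδmul : ∀ a b : K, δ (a * b) = δ a * b + a * δ b)
    (F G R1 R2 : Polynomial K) (hF : F ≠ 0) (hG : G ≠ 0) (hR1 : R1 ≠ 0) (hR2 : R2 ≠ 0)
    (hFc : ∀ i, δ (F.coeff i) = 0) (hGc : ∀ i, δ (G.coeff i) = 0)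
    (hR1c : ∀ i, δ (R1.coeff i) = 0) (hR2c : ∀ i, δ (R2.coeff i) = 0)
    (c : K) (hc0 : c ≠ 0) (hcC : δ c = 0)
    (heq : F * (R1 * R2) = Polynomial.C c *
      (G * (Polynomial.derivative R1 * R2 - R1 * Polynomial.derivative R2)))
    (b : K) (hb0 : b ≠ 0) (hb : c * δ b = b) :
    ∀ y : K, Polynomial.eval y G ≠ 0 → Polynomial.eval y R1 ≠ 0 →
      Polynomial.eval y R2 ≠ 0 → Polynomial.eval y F * δ y = Polynomial.eval y G →
      ∃ u : K, u ≠ 0 ∧ δ u = 0 ∧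
        Polynomial.eval y R1 / Polynomial.eval y R2 = u * b := by
  intro y hGy hA hB hFG
  set A := Polynomial.eval y R1 with hAdef
  set B := Polynomial.eval y R2 with hBdef
  set W := (Polynomial.derivative R1).eval y * B - A * (Polynomial.derivative R2).eval y with hWdef
  -- evaluate the cross-multiplied identity at y
  have he := congrArg (Polynomial.eval y) heq
  simp only [Polynomial.eval_mul, Polynomial.eval_sub, Polynomial.eval_C] at he
  have he2 : Polynomial.eval y G * (A * B) =
      Polynomial.eval y G * (c * W * δ y) := by
    have : (Polynomial.eval y F * δ y) * (A * B) =
        c * (Polynomial.eval y G * W) * δ y := by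
      linear_combination (δ y) * he
    rw [hFG] at this
    linear_combination this
  have hkey : A * B = c * W * δ y := mul_left_cancel₀ hGy he2
  -- derivatives of evaluations
  have hδA : δ A = (Polynomial.derivative R1).eval y * δ y :=
    der_eval δ hδadd hδmul R1 hR1c y
  have hδB : δ B = (Polynomial.derivative R2).eval y * δ y :=
    der_eval δ hδadd hδmul R2 hR2c y
  have hδb : δ b = b / c := by
    rw [eq_div_iff hc0]; linear_combination hb
  have hBb : B * b ≠ 0 := mul_ne_zero hB hb0
  refine ⟨A / (B * b), div_ne_zero hA hBb, ?_, ?_⟩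
  · -- δ (A / (B * b)) = 0
    set u := A / (B * b) with hudef
    have hu : u * (B * b) = A := div_mul_cancel₀ _ hBb
    have h2 : δ (u * (B * b)) = δ A := congrArg δ hu
    rw [hδmul] at h2
    have h3 : δ u * (B * b) = δ A - u * δ (B * b) := by linear_combination h2
    have h4 : δ u * (B * b) = 0 := by
      rw [h3, hδmul, hδA, hδB, hδb, hudef]
      rw [hWdef] at hkey
      field_simp
      linear_combination (-1 : K) * hkey
    rcases mul_eq_zero.1 h4 with h | h
    · exact h
    · exact absurd h hBb
  · field_simp
end

section
/- Let F, G ∈ C[Y] be nonzero polynomials with no common factor of positive degree. Suppose either (a) F/G = c·(∂R/∂Y)/R in C(Y) for some nonzero c ∈ C and nonzero R ∈ C(Y), and there exists b ∈ K, b ≠ 0, with b'/b = 1/c; or (b) F/G = ∂R/∂Y in C(Y) for some nonzero R ∈ C(Y), and there exists x ∈ K with x' = 1. Let L be a differential field extension of K and a ∈ L transcendental over K with F(a)·a' = G(a). Then the constant field of the differential subfield K(a, a') of L properly contains C; that is, the differential polynomial P := F(Y)·Y' − G(Y) creates a constant. -/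
open FirstOrder MvPolynomial

universe u

section Helpers

variable {K : Type u} [Field K] {δ : K → K} (E : DiffFieldExt K δ)

lemma derL_one' : E.derL 1 = 0 := by
  have h := E.derL_mul 1 1
  simp only [mul_one, one_mul] at h
  have h2 : E.derL (1 : E.L) + E.derL 1 = E.derL 1 + 0 := by
    rw [← h, add_zero]
  exact add_left_cancel h2

lemma derL_sub' (x y : E.L) : E.derL (x - y) = E.derL x - E.derL y := by
  have h := E.derL_add (x - y) y
  rw [sub_add_cancel] at h
  exact eq_sub_of_add_eq h.symm

lemma derL_pow' (x : E.L) : ∀ n : ℕ, E.derL (x ^ (n + 1)) = (n + 1 : ℕ) * x ^ n * E.derL x := by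
  intro n
  induction n with
  | zero => simp [pow_one]
  | succ n ih =>
    have h : x ^ (n + 2) = x ^ (n + 1) * x := by ring
    rw [h, E.derL_mul, ih]
    push_cast
    ring

/-- Key lemma: the derivative of a polynomial evaluation, for polynomials
with coefficients that are constants of `δ`. -/
lemma derL_eval₂ (a : E.L) (P : Polynomial K) (hP : ∀ i, δ (P.coeff i) = 0) :
    E.derL (Polynomial.eval₂ (E.emb : K →+* E.L) a P) =
      Polynomial.eval₂ (E.emb : K →+* E.L) a (Polynomial.derivative P) * E.derL a := by
  set N := P.natDegree with hN
  have hconst : ∀ i, E.derL (E.emb (P.coeff i)) = 0 := by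
    intro i; rw [E.emb_der, hP i, map_zero]
  have hsum : E.derL (Polynomial.eval₂ (E.emb : K →+* E.L) a P)
      = ∑ i ∈ Finset.range (N + 1), E.emb (P.coeff i) * E.derL (a ^ i) := by
    rw [Polynomial.eval₂_eq_sum_range]
    have hmap : E.derL (∑ i ∈ Finset.range (P.natDegree + 1), E.emb (P.coeff i) * a ^ i)
        = ∑ i ∈ Finset.range (P.natDegree + 1), E.derL (E.emb (P.coeff i) * a ^ i) :=
      map_sum (AddMonoidHom.mk' E.derL E.derL_add) _ _
    rw [hmap]
    refine Finset.sum_congr rfl fun i _ => ?_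
    rw [E.derL_mul, hconst i, zero_mul, zero_add]
  rw [hsum]
  have hder : Polynomial.eval₂ (E.emb : K →+* E.L) a (Polynomial.derivative P)
      = ∑ i ∈ Finset.range (N + 1), E.emb ((Polynomial.derivative P).coeff i) * a ^ i := by
    refine Polynomial.eval₂_eq_sum_range' _ ?_ _
    exact Nat.lt_succ_of_le (le_trans (Polynomial.natDegree_derivative_le P) (Nat.sub_le _ _))
  rw [hder, Finset.sum_mul]
  rw [Finset.sum_range_succ' (fun i => E.emb (P.coeff i) * E.derL (a ^ i)) N]
  rw [Finset.sum_range_succ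
    (fun i => E.emb ((Polynomial.derivative P).coeff i) * a ^ i * E.derL a) N]
  have hlast : E.emb ((Polynomial.derivative P).coeff N) * a ^ N * E.derL a = 0 := by
    rw [Polynomial.coeff_derivative, Polynomial.coeff_eq_zero_of_natDegree_lt (Nat.lt_succ_self N)]
    simp
  rw [hlast, add_zero]
  have h0 : E.emb (P.coeff 0) * E.derL (a ^ 0) = 0 := by
    simp [derL_one' E]
  rw [h0, add_zero]
  refine Finset.sum_congr rfl fun i _ => ?_
  rw [derL_pow' E a i, Polynomial.coeff_derivative, map_mul]
  push_cast [map_natCast, map_add, map_one]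
  ring

lemma derL_div' (x y w : E.L) (hy : y ≠ 0)
    (hNum : E.derL x * y - x * E.derL y = w * (y * y)) : E.derL (x / y) = w := by
  have h3 : E.derL x = E.derL (x / y) * y + x / y * E.derL y := by
    have h := E.derL_mul (x / y) y
    rwa [div_mul_cancel₀ x hy] at h
  have h5 : x / y * y = x := div_mul_cancel₀ x hy
  have h4 : E.derL (x / y) * (y * y) = w * (y * y) := by
    calc E.derL (x / y) * (y * y)
        = (E.derL (x / y) * y + x / y * E.derL y) * y - (x / y * y) * E.derL y := by ring
      _ = E.derL x * y - x * E.derL y := by rw [← h3, h5]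
      _ = w * (y * y) := hNum
  exact mul_right_cancel₀ (mul_ne_zero hy hy) h4

lemma eval₂_mem_subfield (a : E.L) (S : Subfield E.L) (hemb : ∀ k, E.emb k ∈ S)
    (haS : a ∈ S) (P : Polynomial K) : Polynomial.eval₂ (E.emb : K →+* E.L) a P ∈ S := by
  rw [Polynomial.eval₂_eq_sum_range]
  exact Subfield.sum_mem _ fun i _ => Subfield.mul_mem _ (hemb _) (Subfield.pow_mem _ haS i)

end Helpers

/-- Under hypothesis (a) or (b), the differential polynomial `P = F(Y)·Y′ − G(Y)` creates
a constant: for transcendental `a` with `F(a)·a′ = G(a)` the constant field of `K(a, a′)`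
properly contains `C`. -/
theorem stmt16 {K : Type u} [Field K] [CharZero K] (δ : K → K)
    (hδadd : ∀ a b : K, δ (a + b) = δ a + δ b)
    (hδmul : ∀ a b : K, δ (a * b) = δ a * b + a * δ b)
    (F G : Polynomial K) (hF : F ≠ 0) (hG : G ≠ 0)
    (hFc : ∀ i, δ (F.coeff i) = 0) (hGc : ∀ i, δ (G.coeff i) = 0)
    (hcop : ∀ D : Polynomial K, 0 < D.degree → ¬(D ∣ F ∧ D ∣ G))
    (hcase :
      (∃ (c : K) (R1 R2 : Polynomial K), c ≠ 0 ∧ δ c = 0 ∧ R1 ≠ 0 ∧ R2 ≠ 0 ∧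
        (∀ i, δ (R1.coeff i) = 0) ∧ (∀ i, δ (R2.coeff i) = 0) ∧
        F * (R1 * R2) = Polynomial.C c *
          (G * (Polynomial.derivative R1 * R2 - R1 * Polynomial.derivative R2)) ∧
        ∃ b : K, b ≠ 0 ∧ c * δ b = b) ∨
      (∃ R1 R2 : Polynomial K, R1 ≠ 0 ∧ R2 ≠ 0 ∧
        (∀ i, δ (R1.coeff i) = 0) ∧ (∀ i, δ (R2.coeff i) = 0) ∧
        F * R2 ^ 2 =
          G * (Polynomial.derivative R1 * R2 - R1 * Polynomial.derivative R2) ∧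
        ∃ x : K, δ x = 1))
    (E : DiffFieldExt K δ) (a : E.L)
    (ha_tr : ∀ q : Polynomial K, Polynomial.eval₂ (E.emb : K →+* E.L) a q = 0 → q = 0)
    (ha : Polynomial.eval₂ (E.emb : K →+* E.L) a F * E.derL a =
      Polynomial.eval₂ (E.emb : K →+* E.L) a G) :
    ∃ u ∈ Subfield.closure (Set.range ⇑E.emb ∪ {a, E.derL a}),
      E.derL u = 0 ∧ u ∉ ⇑E.emb '' {c : K | δ c = 0} := by
    classical
  have hnz : ∀ q : Polynomial K, q ≠ 0 → Polynomial.eval₂ (E.emb : K →+* E.L) a q ≠ 0 :=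
    fun q hq h => hq (ha_tr q h)
  have hembinj : Function.Injective E.emb := E.emb.injective
  set S := Subfield.closure (Set.range ⇑E.emb ∪ {a, E.derL a}) with hSdef
  have hembS : ∀ k, E.emb k ∈ S := fun k => Subfield.subset_closure (Or.inl ⟨k, rfl⟩)
  have haS : a ∈ S := Subfield.subset_closure (Or.inr (by simp))
  have heS : ∀ P : Polynomial K, Polynomial.eval₂ (E.emb : K →+* E.L) a P ∈ S :=
    fun P => eval₂_mem_subfield E a S hembS haS P
  rcases hcase with ⟨c, R1, R2, hc, hδc, hR1, hR2, hR1c, hR2c, hid, b, hb, hcb⟩ |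
    ⟨R1, R2, hR1, hR2, hR1c, hR2c, hid, x, hx⟩
  · -- Case (a)
    have hbne : E.emb b ≠ 0 := fun h => hb (hembinj (h.trans (map_zero E.emb).symm))
    have hcne : E.emb c ≠ 0 := fun h => hc (hembinj (h.trans (map_zero E.emb).symm))
    have hQne : Polynomial.eval₂ (E.emb : K →+* E.L) a R2 ≠ 0 := hnz R2 hR2
    have hGne : Polynomial.eval₂ (E.emb : K →+* E.L) a G ≠ 0 := hnz G hG
    have hyne : E.emb b * Polynomial.eval₂ (E.emb : K →+* E.L) a R2 ≠ 0 :=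
      mul_ne_zero hbne hQne
    refine ⟨Polynomial.eval₂ (E.emb : K →+* E.L) a R1 /
        (E.emb b * Polynomial.eval₂ (E.emb : K →+* E.L) a R2),
      Subfield.div_mem _ (heS R1) (Subfield.mul_mem _ (hembS b) (heS R2)), ?_, ?_⟩
    · apply derL_div' E _ _ 0 hyne
      rw [zero_mul]
      have h1 := derL_eval₂ E a R1 hR1c
      have h2 := derL_eval₂ E a R2 hR2c
      have h3 : E.derL (E.emb b * Polynomial.eval₂ (E.emb : K →+* E.L) a R2)
          = E.emb (δ b) * Polynomial.eval₂ (E.emb : K →+* E.L) a R2 +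
            E.emb b * (Polynomial.eval₂ (E.emb : K →+* E.L) a (Polynomial.derivative R2)
              * E.derL a) := by
        rw [E.derL_mul, E.emb_der, h2]
      have hid' : Polynomial.eval₂ (E.emb : K →+* E.L) a F *
          (Polynomial.eval₂ (E.emb : K →+* E.L) a R1 *
            Polynomial.eval₂ (E.emb : K →+* E.L) a R2)
          = E.emb c * (Polynomial.eval₂ (E.emb : K →+* E.L) a G *
            (Polynomial.eval₂ (E.emb : K →+* E.L) a (Polynomial.derivative R1) *
              Polynomial.eval₂ (E.emb : K →+* E.L) a R2 -
             Polynomial.eval₂ (E.emb : K →+* E.L) a R1 *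
              Polynomial.eval₂ (E.emb : K →+* E.L) a (Polynomial.derivative R2))) := by
        have h := congrArg (Polynomial.eval₂ (E.emb : K →+* E.L) a) hid
        simpa only [Polynomial.eval₂_mul, Polynomial.eval₂_sub, Polynomial.eval₂_C] using h
      have hb' : E.emb c * E.emb (δ b) = E.emb b := by rw [← map_mul, hcb]
      apply mul_right_cancel₀ (mul_ne_zero hcne hGne)
      rw [h1, h3]
      linear_combination (-(E.emb b * E.derL a)) * hid' +
        (E.emb b * Polynomial.eval₂ (E.emb : K →+* E.L) a R1 *
          Polynomial.eval₂ (E.emb : K →+* E.L) a R2) * ha -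
        (Polynomial.eval₂ (E.emb : K →+* E.L) a G *
          Polynomial.eval₂ (E.emb : K →+* E.L) a R1 *
          Polynomial.eval₂ (E.emb : K →+* E.L) a R2) * hb'
    · rintro ⟨k, -, hke⟩
      have h6 : Polynomial.eval₂ (E.emb : K →+* E.L) a R1 =
          E.emb k * (E.emb b * Polynomial.eval₂ (E.emb : K →+* E.L) a R2) :=
        (div_eq_iff hyne).mp hke.symm
      have h7 : Polynomial.eval₂ (E.emb : K →+* E.L) a
          (R1 - Polynomial.C (k * b) * R2) = 0 := by
        rw [Polynomial.eval₂_sub, Polynomial.eval₂_mul, Polynomial.eval₂_C, map_mul, h6]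
        ring
      have h9 : R1 = Polynomial.C (k * b) * R2 := sub_eq_zero.mp (ha_tr _ h7)
      have h10 : Polynomial.derivative R1 * R2 - R1 * Polynomial.derivative R2 = 0 := by
        rw [h9, Polynomial.derivative_C_mul]; ring
      rw [h10, mul_zero, mul_zero] at hid
      exact (mul_ne_zero hF (mul_ne_zero hR1 hR2)) hid
  · -- Case (b)
    have hQne : Polynomial.eval₂ (E.emb : K →+* E.L) a R2 ≠ 0 := hnz R2 hR2
    have hGne : Polynomial.eval₂ (E.emb : K →+* E.L) a G ≠ 0 := hnz G hG
    refine ⟨Polynomial.eval₂ (E.emb : K →+* E.L) a R1 /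
        Polynomial.eval₂ (E.emb : K →+* E.L) a R2 - E.emb x,
      Subfield.sub_mem _ (Subfield.div_mem _ (heS R1) (heS R2)) (hembS x), ?_, ?_⟩
    · have hdx : E.derL (E.emb x) = 1 := by rw [E.emb_der, hx, map_one]
      have hdiv : E.derL (Polynomial.eval₂ (E.emb : K →+* E.L) a R1 /
          Polynomial.eval₂ (E.emb : K →+* E.L) a R2) = 1 := by
        apply derL_div' E _ _ 1 hQne
        rw [one_mul]
        rw [derL_eval₂ E a R1 hR1c, derL_eval₂ E a R2 hR2c]
        have hid' : Polynomial.eval₂ (E.emb : K →+* E.L) a F *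
            Polynomial.eval₂ (E.emb : K →+* E.L) a R2 ^ 2
            = Polynomial.eval₂ (E.emb : K →+* E.L) a G *
              (Polynomial.eval₂ (E.emb : K →+* E.L) a (Polynomial.derivative R1) *
                Polynomial.eval₂ (E.emb : K →+* E.L) a R2 -
               Polynomial.eval₂ (E.emb : K →+* E.L) a R1 *
                Polynomial.eval₂ (E.emb : K →+* E.L) a (Polynomial.derivative R2)) := by
          have h := congrArg (Polynomial.eval₂ (E.emb : K →+* E.L) a) hid
          simpa only [Polynomial.eval₂_mul, Polynomial.eval₂_sub, Polynomial.eval₂_C,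
            Polynomial.eval₂_pow] using h
        apply mul_left_cancel₀ hGne
        linear_combination (-(E.derL a)) * hid' +
          (Polynomial.eval₂ (E.emb : K →+* E.L) a R2 *
            Polynomial.eval₂ (E.emb : K →+* E.L) a R2) * ha
      rw [derL_sub' E, hdiv, hdx, sub_self]
    · rintro ⟨k, -, hke⟩
      have h6 : Polynomial.eval₂ (E.emb : K →+* E.L) a R1 /
          Polynomial.eval₂ (E.emb : K →+* E.L) a R2 = E.emb (k + x) := by
        rw [map_add, hke]; ring
      have h6' : Polynomial.eval₂ (E.emb : K →+* E.L) a R1 =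
          E.emb (k + x) * Polynomial.eval₂ (E.emb : K →+* E.L) a R2 :=
        (div_eq_iff hQne).mp h6
      have h7 : Polynomial.eval₂ (E.emb : K →+* E.L) a
          (R1 - Polynomial.C (k + x) * R2) = 0 := by
        rw [Polynomial.eval₂_sub, Polynomial.eval₂_mul, Polynomial.eval₂_C, h6']
        ring
      have h9 : R1 = Polynomial.C (k + x) * R2 := sub_eq_zero.mp (ha_tr _ h7)
      have h10 : Polynomial.derivative R1 * R2 - R1 * Polynomial.derivative R2 = 0 := by
        rw [h9, Polynomial.derivative_C_mul]; ring
      rw [h10, mul_zero] at hid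
      exact (mul_ne_zero hF (pow_ne_zero 2 hR2)) hid
end

section
/- Let P ∈ K[Y,Y'] be irreducible of order 1 (i.e., irreducible in the polynomial ring K[Y,Y'] in two indeterminates, with deg_{Y'} P ≥ 1), and suppose Z(P) := {y ∈ K : P(y, y') = 0} is infinite. Then for every Q ∈ K[Y,Y']: Z(P) ⊆ Z(Q) if and only if Q ∈ P·K[Y,Y']. -/
open FirstOrder MvPolynomial

universe u

section Stmt17Aux
open MvPolynomial
variable {K : Type u} [Field K]

noncomputable def e1 (K : Type u) [Field K] : MvPolynomial (Fin 1) K ≃ₐ[K] Polynomial K :=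
  (renameEquiv K (Equiv.equivPUnit.{1} (Fin 1))).trans (pUnitAlgEquiv.{u,0} K)

noncomputable def e2 (K : Type u) [Field K] :
    MvPolynomial (Fin 2) K ≃ₐ[K] Polynomial (Polynomial K) :=
  (renameEquiv K (Equiv.swap 0 1)).trans ((finSuccEquiv K 1).trans (Polynomial.mapAlgEquiv (e1 K)))

lemma e1_X : e1 K (X 0) = Polynomial.X := by simp [e1]

lemma e2_X0 : e2 K (X 0) = Polynomial.C Polynomial.X := by
  have h1 : (X ((Equiv.swap (0:Fin 2) 1) 0) : MvPolynomial (Fin 2) K) = X (Fin.succ 0) := by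
    rw [Equiv.swap_apply_left]; rfl
  rw [e2]
  simp only [AlgEquiv.trans_apply, renameEquiv_apply, rename_X, h1, finSuccEquiv_X_succ,
    Polynomial.coe_mapAlgEquiv, Polynomial.map_C]
  simp [e1]

lemma e2_X1 : e2 K (X 1) = Polynomial.X := by
  have h1 : (Equiv.swap (0:Fin 2) 1) 1 = 0 := Equiv.swap_apply_right 0 1
  rw [e2]
  simp only [AlgEquiv.trans_apply, renameEquiv_apply, rename_X, h1, finSuccEquiv_X_zero,
    Polynomial.coe_mapAlgEquiv, Polynomial.map_X]

lemma e2_C (a : K) : e2 K (C a) = Polynomial.C (Polynomial.C a) := by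
  rw [e2]
  simp only [AlgEquiv.trans_apply, renameEquiv_apply, rename_C, Polynomial.coe_mapAlgEquiv]
  have h : (finSuccEquiv K 1) (C a : MvPolynomial (Fin 2) K) = Polynomial.C (C a) := by
    simp [finSuccEquiv_apply]
  rw [h, Polynomial.map_C]
  simp [e1]

lemma e2_eval (y y' : K) (P : MvPolynomial (Fin 2) K) :
    eval ![y, y'] P = Polynomial.eval y' ((e2 K P).map (Polynomial.evalRingHom y)) := by
  induction P using MvPolynomial.induction_on with
  | C a => simp [e2_C]
  | add p q hp hq => simp [map_add, hp, hq]
  | mul_X p i hp =>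
    fin_cases i <;>
      simp [map_mul, hp, e2_X0, e2_X1]

lemma e2_natDegree (P : MvPolynomial (Fin 2) K) :
    (e2 K P).natDegree = degreeOf 1 P := by
  have h0 : (Equiv.swap (0:Fin 2) 1) 1 = 0 := Equiv.swap_apply_right 0 1
  have := natDegree_finSuccEquiv (rename (Equiv.swap (0:Fin 2) 1) P)
  have h2 := degreeOf_rename_of_injective (p := P) (f := Equiv.swap (0:Fin 2) 1)
    (Equiv.swap 0 1).injective 1
  rw [h0] at h2
  rw [e2]
  simp only [AlgEquiv.trans_apply, renameEquiv_apply, Polynomial.coe_mapAlgEquiv]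
  rw [Polynomial.natDegree_map_eq_of_injective (e1 K).injective, this, h2]
end Stmt17Aux

/-- If `P ∈ K[Y,Y′]` is irreducible of order 1 with `Z(P)` infinite, then for all
`Q ∈ K[Y,Y′]`: `Z(P) ⊆ Z(Q)` iff `Q ∈ P·K[Y,Y′]`. -/
theorem stmt17 {K : Type u} [Field K] [CharZero K] (δ : K → K)
    (hδadd : ∀ a b : K, δ (a + b) = δ a + δ b)
    (hδmul : ∀ a b : K, δ (a * b) = δ a * b + a * δ b)
    (P : MvPolynomial (Fin 2) K) (hirr : Irreducible P)
    (hord : 1 ≤ MvPolynomial.degreeOf (1 : Fin 2) P)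
    (hinf : {y : K | MvPolynomial.eval ![y, δ y] P = 0}.Infinite) :
    ∀ Q : MvPolynomial (Fin 2) K,
      {y : K | MvPolynomial.eval ![y, δ y] P = 0} ⊆
        {y : K | MvPolynomial.eval ![y, δ y] Q = 0} ↔ P ∣ Q := by
  intro Q
  constructor
  · intro hsub
    by_contra hnd
    letI : DecidableEq K := Classical.decEq K
    haveI hgcd : NormalizedGCDMonoid (Polynomial K) := inferInstance
    set R := Polynomial K with hR
    let F := FractionRing R
    set pR := e2 K P with hpRdef
    set qR := e2 K Q with hqRdef
    have hdeg : 1 ≤ pR.natDegree := by rw [e2_natDegree]; exact hord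
    have hpR0 : pR ≠ 0 := fun h => by simp [h] at hdeg
    have hirr' : Irreducible pR := hirr.map (e2 K)
    have hndR : ¬ pR ∣ qR := fun h => hnd ((map_dvd_iff (e2 K)).mp h)
    have hprime : Prime pR := hirr'.prime
    have hprim : pR.IsPrimitive := by
      rw [Polynomial.isPrimitive_iff_isUnit_of_C_dvd]
      intro r hr
      obtain ⟨s, hs⟩ := hr
      rcases hirr'.isUnit_or_isUnit hs with h | h
      · exact Polynomial.isUnit_C.mp h
      · exfalso
        have h1 : s.natDegree = 0 := Polynomial.natDegree_eq_zero_of_isUnit h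
        have hr0 : r ≠ 0 := by rintro rfl; simp at hs; exact hpR0 hs
        have hs0 : s ≠ 0 := fun h0 => by simp [h0] at hs; exact hpR0 hs
        have := Polynomial.natDegree_mul (Polynomial.C_ne_zero.mpr hr0) hs0
        rw [← hs, Polynomial.natDegree_C, h1] at this
        omega
    have hirrF : Irreducible (pR.map (algebraMap R F)) :=
      (hprim.irreducible_iff_irreducible_map_fraction_map (K := F)).mp hirr'
    have hinj := IsFractionRing.injective R F
    have hndvdF : ¬ pR.map (algebraMap R F) ∣ qR.map (algebraMap R F) := by
      rintro ⟨c, hc⟩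
      obtain ⟨d, hd⟩ := IsLocalization.integerNormalization_map_to_map (nonZeroDivisors R) c
      have heq : Polynomial.C (d : R) * qR =
          pR * IsLocalization.integerNormalization (nonZeroDivisors R) c := by
        apply Polynomial.map_injective (algebraMap R F) hinj
        rw [Polynomial.map_mul, Polynomial.map_mul, hd, Polynomial.map_C, hc,
          Algebra.smul_def, Polynomial.algebraMap_apply]
        ring
      have hdvd : pR ∣ Polynomial.C (d : R) * qR := Dvd.intro _ heq.symm
      rcases hprime.2.2 _ _ hdvd with h | h
      · have hd0 : (d : R) ≠ 0 := nonZeroDivisors.coe_ne_zero d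
        have := Polynomial.natDegree_le_of_dvd h (Polynomial.C_ne_zero.mpr hd0)
        rw [Polynomial.natDegree_C] at this
        omega
      · exact hndR h
    have hcop : IsCoprime (pR.map (algebraMap R F)) (qR.map (algebraMap R F)) :=
      hirrF.coprime_iff_not_dvd.mpr hndvdF
    obtain ⟨a, b, hab⟩ := hcop
    obtain ⟨da, hda⟩ := IsLocalization.integerNormalization_map_to_map (nonZeroDivisors R) a
    obtain ⟨db, hdb⟩ := IsLocalization.integerNormalization_map_to_map (nonZeroDivisors R) b
    set A := IsLocalization.integerNormalization (nonZeroDivisors R) a with hA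
    set B := IsLocalization.integerNormalization (nonZeroDivisors R) b with hB
    set r : R := (da : R) * (db : R) with hr
    have key : Polynomial.C (db : R) * A * pR + Polynomial.C (da : R) * B * qR
        = Polynomial.C r := by
      apply Polynomial.map_injective (algebraMap R F) hinj
      rw [Polynomial.map_add, Polynomial.map_mul, Polynomial.map_mul, Polynomial.map_mul,
        Polynomial.map_mul, hda, hdb, Polynomial.map_C, Polynomial.map_C, Polynomial.map_C,
        Algebra.smul_def, Algebra.smul_def, Polynomial.algebraMap_apply,
        Polynomial.algebraMap_apply, hr, map_mul, Polynomial.C_mul]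
      linear_combination (Polynomial.C (algebraMap R F (da : R)) *
        Polynomial.C (algebraMap R F (db : R))) * hab
    have hrne : r ≠ 0 :=
      mul_ne_zero (nonZeroDivisors.coe_ne_zero da) (nonZeroDivisors.coe_ne_zero db)
    have hroot : {y : K | MvPolynomial.eval ![y, δ y] P = 0} ⊆ {x | r.IsRoot x} := by
      intro y hy
      have hQ : MvPolynomial.eval ![y, δ y] Q = 0 := hsub hy
      have key2 := congrArg (fun z => MvPolynomial.eval ![y, δ y] ((e2 K).symm z)) key
      simp only [map_add, map_mul, (e2 K).symm_apply_apply, ← hpRdef, ← hqRdef] at key2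
      rw [hpRdef, hqRdef, (e2 K).symm_apply_apply, (e2 K).symm_apply_apply] at key2
      rw [Set.mem_setOf_eq] at hy
      rw [hy, hQ, mul_zero, mul_zero, add_zero] at key2
      have : MvPolynomial.eval ![y, δ y] ((e2 K).symm (Polynomial.C r)) = r.eval y := by
        rw [e2_eval y (δ y), (e2 K).apply_symm_apply, Polynomial.map_C, Polynomial.eval_C,
          Polynomial.coe_evalRingHom]
      rw [this] at key2
      exact key2.symm
    exact hrne (Polynomial.eq_zero_of_infinite_isRoot r (hinf.mono hroot))
  · rintro ⟨S, rfl⟩ y hy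
    rw [Set.mem_setOf_eq] at hy ⊢
    rw [map_mul, hy, zero_mul]
end

section
/- Let P ∈ K[Y,Y'] be irreducible of order 1 (irreducible in K[Y,Y'] with deg_{Y'} P ≥ 1), and suppose Z(P) := {y ∈ K : P(y, y') = 0} is infinite. Then there exist an elementary extension K* of K (in the language of differential rings) and an element a ∈ K* such that P(a, a') = 0 and Q(a, a') ≠ 0 for every nonzero Q ∈ K[Y,Y'] with deg_{Y'} Q < deg_{Y'} P; in particular, a is transcendental over K and P is a minimal annihilator of a over K. -/
open FirstOrder MvPolynomial

universe u

/-! ### Auxiliary material for `stmt18` -/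

section Stmt18Aux

open Filter

/-- Extensionality for first-order structures. -/
private lemma structure_ext {L : FirstOrder.Language} {M : Type*} {S T : L.Structure M}
    (hf : ∀ (n : ℕ) (f : L.Functions n) (v : Fin n → M),
      @FirstOrder.Language.Structure.funMap L M S n f v =
        @FirstOrder.Language.Structure.funMap L M T n f v)
    (hr : ∀ (n : ℕ) (r : L.Relations n) (v : Fin n → M),
      @FirstOrder.Language.Structure.RelMap L M S n r v =
        @FirstOrder.Language.Structure.RelMap L M T n r v) : S = T := by
  obtain ⟨Sf, Sr⟩ := S
  obtain ⟨Tf, Tr⟩ := T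
  have h1 : @Sf = @Tf := funext fun n => funext fun f => funext fun v => hf n f v
  have h2 : @Sr = @Tr := funext fun n => funext fun r => funext fun v => hr n r v
  cases h1; cases h2; rfl

variable {K : Type u} [Field K]

private lemma dStructure_eq_ultra {I : Type u} (U : Ultrafilter I) (δ : K → K) :
    (@dStructure (Filter.Germ (U : Filter I) K)
        (inferInstanceAs (Field (Filter.Germ (U : Filter I) K))) (Filter.Germ.map δ) :
        dLang.Structure ((U : Filter I).Product fun _ => K)) =
      @FirstOrder.Language.Ultraproduct.structure I (fun _ => K) U dLang
        (fun _ => dStructure δ) := by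
  letI : ∀ _ : I, dLang.Structure K := fun _ => dStructure δ
  refine structure_ext ?_ ?_
  · intro n f v
    obtain ⟨x, rfl⟩ : ∃ x : Fin n → ∀ _ : I, K,
        (fun i => ((x i : ∀ _ : I, K) : (U : Filter I).Product fun _ => K)) = v :=
      ⟨fun i => Quotient.out (v i), funext fun i => Quotient.out_eq (v i)⟩
    refine Eq.trans ?_ (@FirstOrder.Language.Ultraproduct.funMap_cast I (fun _ => K) U dLang
      (fun _ => dStructure δ) n f x).symm
    revert x
    match n, f with
    | 0, ⟨0, _⟩ => intro x; rfl
    | 0, ⟨1, _⟩ => intro x; rfl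
    | 1, ⟨0, _⟩ => intro x; rfl
    | 1, ⟨1, _⟩ => intro x; rfl
    | 2, ⟨0, _⟩ => intro x; rfl
    | 2, ⟨1, _⟩ => intro x; rfl
    | (n+3), f => exact f.elim
  · intro n r v
    exact r.elim

/-- The variable-swapping equivalence `K[Y,Y'] ≃ (K[Y])[Y']`. -/
private noncomputable def yEquiv (K : Type u) [CommSemiring K] :
    MvPolynomial (Fin 2) K ≃ₐ[K] Polynomial (MvPolynomial (Fin 1) K) :=
  (MvPolynomial.renameEquiv K (Equiv.swap (0 : Fin 2) 1)).trans (MvPolynomial.finSuccEquiv K 1)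

private lemma yEquiv_apply {K : Type u} [CommSemiring K] (p : MvPolynomial (Fin 2) K) :
    yEquiv K p =
      MvPolynomial.finSuccEquiv K 1 (MvPolynomial.rename (⇑(Equiv.swap (0 : Fin 2) 1)) p) :=
  rfl

private lemma natDegree_yEquiv (p : MvPolynomial (Fin 2) K) :
    (yEquiv K p).natDegree = MvPolynomial.degreeOf (1 : Fin 2) p := by
  rw [yEquiv_apply, MvPolynomial.natDegree_finSuccEquiv]
  have h := MvPolynomial.degreeOf_rename_of_injective (p := p)
      (Equiv.swap (0 : Fin 2) 1).injective (1 : Fin 2)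
  rwa [Equiv.swap_apply_right] at h

private lemma yEquiv_rename_const (c : MvPolynomial (Fin 1) K) :
    yEquiv K (MvPolynomial.rename (fun _ : Fin 1 => (0 : Fin 2)) c) = Polynomial.C c := by
  rw [yEquiv_apply, MvPolynomial.rename_rename]
  have hfun : (⇑(Equiv.swap (0 : Fin 2) 1) ∘ fun _ : Fin 1 => (0 : Fin 2)) = Fin.succ := by
    funext x
    have hx : x = 0 := Subsingleton.elim x 0
    subst hx
    simp [Equiv.swap_apply_left]
  rw [hfun]
  induction c using MvPolynomial.induction_on with
  | C a => simp [MvPolynomial.finSuccEquiv_apply]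
  | add p q hp hq => simp [hp, hq]
  | mul_X p i hp => simp [hp, MvPolynomial.finSuccEquiv_X_succ]

private lemma eval_yEquiv_symm_C (c : MvPolynomial (Fin 1) K) (w : Fin 2 → K) :
    MvPolynomial.eval w ((yEquiv K).symm (Polynomial.C c)) =
      MvPolynomial.eval (fun _ : Fin 1 => w 0) c := by
  rw [← yEquiv_rename_const, AlgEquiv.symm_apply_apply, MvPolynomial.eval_rename]
  rfl

/-- Key algebraic finiteness: the common zeros (on the "graph of `δ`") of an irreducible `P`
of positive `Y'`-degree and a nonzero `Q` of smaller `Y'`-degree form a finite set. -/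
private lemma finite_common_zeros (δ : K → K) (P Q : MvPolynomial (Fin 2) K)
    (hirr : Irreducible P) (hord : 1 ≤ MvPolynomial.degreeOf (1 : Fin 2) P)
    (hQ : Q ≠ 0)
    (hdeg : MvPolynomial.degreeOf (1 : Fin 2) Q < MvPolynomial.degreeOf (1 : Fin 2) P) :
    {y : K | MvPolynomial.eval ![y, δ y] P = 0 ∧ MvPolynomial.eval ![y, δ y] Q = 0}.Finite := by
  classical
  set A := MvPolynomial (Fin 1) K with hA
  letI : NormalizationMonoid A := UniqueFactorizationMonoid.normalizationMonoid.toNormalizationMonoid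
  letI : NormalizedGCDMonoid A := UniqueFactorizationMonoid.toNormalizedGCDMonoid A
  set F := FractionRing A with hF
  set P1 := yEquiv K P with hP1
  set Q1 := yEquiv K Q with hQ1
  have hP1irr : Irreducible P1 := (MulEquiv.irreducible_iff (yEquiv K)).mpr hirr
  have hP1deg : 1 ≤ P1.natDegree := by rw [hP1, natDegree_yEquiv]; exact hord
  have hQ1deg : Q1.natDegree < P1.natDegree := by
    rw [hP1, hQ1, natDegree_yEquiv, natDegree_yEquiv]; exact hdeg
  have hQ1ne : Q1 ≠ 0 := by
    rw [hQ1]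
    simp only [ne_eq, EmbeddingLike.map_eq_zero_iff]
    exact hQ
  have hP1prim : P1.IsPrimitive := by
    intro r hr
    obtain ⟨t, ht⟩ := hr
    rcases hP1irr.isUnit_or_isUnit ht with h | h
    · exact Polynomial.isUnit_C.mp h
    · exfalso
      have h1 : t.natDegree = 0 := Polynomial.natDegree_eq_zero_of_isUnit h
      have h2 : P1.natDegree ≤ 0 := by
        rw [ht]
        refine le_trans (Polynomial.natDegree_mul_le) ?_
        simp [h1]
      omega
  have hinj := IsFractionRing.injective A F
  set P2 := P1.map (algebraMap A F) with hP2
  set Q2 := Q1.map (algebraMap A F) with hQ2def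
  have hP2irr : Irreducible P2 :=
    (hP1prim.irreducible_iff_irreducible_map_fraction_map).mp hP1irr
  have hQ2ne : Q2 ≠ 0 := (Polynomial.map_ne_zero_iff hinj).mpr hQ1ne
  have hnd : ¬ P2 ∣ Q2 := by
    intro h
    have h1 := Polynomial.natDegree_le_of_dvd h hQ2ne
    rw [hP2, hQ2def, Polynomial.natDegree_map_eq_of_injective hinj,
      Polynomial.natDegree_map_eq_of_injective hinj] at h1
    omega
  obtain ⟨uu, vv, huv⟩ := hP2irr.coprime_iff_not_dvd.mpr hnd
  obtain ⟨bu, hbu⟩ := IsLocalization.integerNormalization_map_to_map (nonZeroDivisors A) uu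
  obtain ⟨bv, hbv⟩ := IsLocalization.integerNormalization_map_to_map (nonZeroDivisors A) vv
  set u0 := IsLocalization.integerNormalization (nonZeroDivisors A) uu with hu0
  set v0 := IsLocalization.integerNormalization (nonZeroDivisors A) vv with hv0
  have hsm : ∀ (b : A) (p : Polynomial F), b • p = Polynomial.C (algebraMap A F b) * p := by
    intro b p
    rw [← algebraMap_smul F b p, Polynomial.smul_eq_C_mul]
  have hmap : (Polynomial.C (bv : A) * u0 * P1 + Polynomial.C (bu : A) * v0 * Q1).map
        (algebraMap A F) = (Polynomial.C ((bu : A) * (bv : A))).map (algebraMap A F) := by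
    rw [Polynomial.map_add, Polynomial.map_mul, Polynomial.map_mul, Polynomial.map_mul,
      Polynomial.map_mul, Polynomial.map_C, Polynomial.map_C, Polynomial.map_C, hbu, hbv,
      hsm, hsm, map_mul, Polynomial.C_mul]
    linear_combination (Polynomial.C (algebraMap A F (bu : A)) *
      Polynomial.C (algebraMap A F (bv : A))) * huv
  have heq := Polynomial.map_injective _ hinj hmap
  set c : A := (bu : A) * (bv : A) with hc
  have hcne : c ≠ 0 :=
    mul_ne_zero (nonZeroDivisors.coe_ne_zero bu) (nonZeroDivisors.coe_ne_zero bv)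
  -- convert `c` into a univariate polynomial
  set pc : Polynomial K :=
    MvPolynomial.pUnitAlgEquiv.{u,0} K (MvPolynomial.rename (fun _ : Fin 1 => ()) c) with hpc
  have hren : Function.Injective
      (MvPolynomial.rename (R := K) (fun _ : Fin 1 => ())) :=
    MvPolynomial.rename_injective _ (fun a b _ => Subsingleton.elim a b)
  have hpcne : pc ≠ 0 := by
    rw [hpc]
    simp only [ne_eq, EmbeddingLike.map_eq_zero_iff]
    intro h
    exact hcne (hren (h.trans (map_zero _).symm))
  have hroot : ∀ y : K, Polynomial.eval y pc = MvPolynomial.eval (fun _ : Fin 1 => y) c := by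
    intro y
    rw [hpc, MvPolynomial.uniqueAlgEquiv_apply]
    have h1 := MvPolynomial.eval₂_comp_left (Polynomial.evalRingHom y)
        (Polynomial.C : K →+* Polynomial K) (fun _ : Unit => Polynomial.X)
        (MvPolynomial.rename (fun _ : Fin 1 => ()) c)
    rw [show ((Polynomial.evalRingHom y).comp (Polynomial.C : K →+* Polynomial K)) =
        RingHom.id K from RingHom.ext fun a => by simp] at h1
    rw [show ((Polynomial.evalRingHom y) ∘ (fun _ : Unit => Polynomial.X)) =
        (fun _ : Unit => y) from funext fun _ => by simp] at h1
    calc Polynomial.eval y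
          (MvPolynomial.eval₂ Polynomial.C (fun _ => Polynomial.X)
            (MvPolynomial.rename (fun _ : Fin 1 => ()) c)) = _ := h1
      _ = MvPolynomial.eval (fun _ : Unit => y)
            (MvPolynomial.rename (fun _ : Fin 1 => ()) c) :=
          MvPolynomial.eval₂_id _
      _ = MvPolynomial.eval (fun _ : Fin 1 => y) c := by rw [MvPolynomial.eval_rename]; rfl
  apply Set.Finite.subset (Polynomial.finite_setOf_isRoot hpcne)
  intro y hy
  obtain ⟨hyP, hyQ⟩ := hy
  show Polynomial.eval y pc = 0
  rw [hroot]
  have hsp : (yEquiv K).symm P1 = P := by rw [hP1]; exact AlgEquiv.symm_apply_apply _ _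
  have hsq : (yEquiv K).symm Q1 = Q := by rw [hQ1]; exact AlgEquiv.symm_apply_apply _ _
  have h7 : MvPolynomial.eval (fun _ : Fin 1 => y) c =
      MvPolynomial.eval ![y, δ y] ((yEquiv K).symm (Polynomial.C c)) :=
    (eval_yEquiv_symm_C c ![y, δ y]).symm
  rw [h7, ← heq]
  simp only [map_add, map_mul, hsp, hsq, hyP, hyQ, mul_zero, add_zero, zero_add, zero_mul]

end Stmt18Aux

/-- If `P ∈ K[Y,Y′]` is irreducible of order 1 with `Z(P)` infinite, there is an elementary
extension `K*` of `K` and `a ∈ K*` with `P(a,a′) = 0` and `Q(a,a′) ≠ 0` for all nonzero `Q`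
with `deg_{Y′} Q < deg_{Y′} P`; in particular `a` is transcendental over `K`. -/
theorem stmt18 {K : Type u} [Field K] [CharZero K] (δ : K → K)
    (hδadd : ∀ a b : K, δ (a + b) = δ a + δ b)
    (hδmul : ∀ a b : K, δ (a * b) = δ a * b + a * δ b)
    (P : MvPolynomial (Fin 2) K) (hirr : Irreducible P)
    (hord : 1 ≤ MvPolynomial.degreeOf (1 : Fin 2) P)
    (hinf : {y : K | MvPolynomial.eval ![y, δ y] P = 0}.Infinite) :
    ∃ (E : DiffElemExt K δ) (a : E.L),
      MvPolynomial.eval₂ (E.emb : K →+* E.L) ![a, E.derL a] P = 0 ∧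
      (∀ Q : MvPolynomial (Fin 2) K, Q ≠ 0 →
        MvPolynomial.degreeOf (1 : Fin 2) Q < MvPolynomial.degreeOf (1 : Fin 2) P →
        MvPolynomial.eval₂ (E.emb : K →+* E.L) ![a, E.derL a] Q ≠ 0) ∧
      (∀ q : Polynomial K, q ≠ 0 → Polynomial.eval₂ (E.emb : K →+* E.L) a q ≠ 0) := by
  classical
  set T := {Q : MvPolynomial (Fin 2) K //
    Q ≠ 0 ∧ MvPolynomial.degreeOf (1 : Fin 2) Q < MvPolynomial.degreeOf (1 : Fin 2) P} with hT
  have hchoice : ∀ s : Finset T, ∃ y : K, MvPolynomial.eval ![y, δ y] P = 0 ∧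
      ∀ q : T, q ∈ s → MvPolynomial.eval ![y, δ y] q.1 ≠ 0 := by
    intro s
    have hfin : (⋃ q ∈ s, {y : K | MvPolynomial.eval ![y, δ y] P = 0 ∧
        MvPolynomial.eval ![y, δ y] q.1 = 0}).Finite :=
      Set.Finite.biUnion s.finite_toSet fun q _ =>
        finite_common_zeros δ P q.1 hirr hord q.2.1 q.2.2
    obtain ⟨y, hy⟩ := (hinf.diff hfin).nonempty
    refine ⟨y, hy.1, fun q hq hq0 => ?_⟩
    exact hy.2 (Set.mem_biUnion hq ⟨hy.1, hq0⟩)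
  choose y hyP hyQ using hchoice
  haveI : Nonempty (Finset T) := ⟨∅⟩
  haveI : (Filter.atTop : Filter (Finset T)).NeBot := Filter.atTop_neBot
  set U : Ultrafilter (Finset T) := Ultrafilter.of Filter.atTop with hUdef
  have hUmem : ∀ s : Finset T, {t : Finset T | s ≤ t} ∈ (U : Filter (Finset T)) :=
    fun s => (Ultrafilter.of_le Filter.atTop) (Filter.mem_atTop s)
  set emb : K →+* Filter.Germ (U : Filter (Finset T)) K :=
    (Filter.Germ.coeRingHom ((U : Filter (Finset T)))).comp (Pi.constRingHom (Finset T) K)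
    with hembdef
  set a : Filter.Germ (U : Filter (Finset T)) K := Filter.Germ.ofFun y with hadef
  set da : Filter.Germ (U : Filter (Finset T)) K := Filter.Germ.map δ a with hdadef
  -- the bridge between `eval₂` into the ultrapower and pointwise evaluation
  have hbridge : ∀ R : MvPolynomial (Fin 2) K,
      MvPolynomial.eval₂ emb ![a, da] R =
        Filter.Germ.ofFun (fun s => MvPolynomial.eval ![y s, δ (y s)] R) := by
    intro R
    have h1 := MvPolynomial.eval₂_comp_left (Filter.Germ.coeRingHom ((U : Filter (Finset T))))
        (Pi.constRingHom (Finset T) K) (![y, δ ∘ y]) R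
    have h2 : (⇑(Filter.Germ.coeRingHom ((U : Filter (Finset T)))) ∘ ![y, δ ∘ y]) =
        ![a, da] := by
      funext j
      fin_cases j
      · rfl
      · rfl
    rw [h2] at h1
    rw [hembdef, ← h1]
    show Filter.Germ.ofFun _ = Filter.Germ.ofFun _
    apply congrArg
    funext s
    have h3 := MvPolynomial.eval₂_comp_left (Pi.evalRingHom (fun _ : Finset T => K) s)
        (Pi.constRingHom (Finset T) K) (![y, δ ∘ y]) R
    have h4 : (Pi.evalRingHom (fun _ : Finset T => K) s).comp (Pi.constRingHom (Finset T) K) =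
        RingHom.id K := RingHom.ext fun _ => rfl
    have h5 : (⇑(Pi.evalRingHom (fun _ : Finset T => K) s) ∘ ![y, δ ∘ y]) =
        ![y s, δ (y s)] := by
      funext j
      fin_cases j <;> rfl
    rw [h4, h5, MvPolynomial.eval₂_id] at h3
    exact h3
  have hP0 : MvPolynomial.eval₂ emb ![a, da] P = 0 := by
    rw [hbridge]
    have h6 : (fun s => MvPolynomial.eval ![y s, δ (y s)] P) = fun _ => (0 : K) :=
      by funext s; exact hyP s
    rw [h6]
    exact Filter.Germ.coe_zero
  have hQne : ∀ Q : MvPolynomial (Fin 2) K, Q ≠ 0 →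
      MvPolynomial.degreeOf (1 : Fin 2) Q < MvPolynomial.degreeOf (1 : Fin 2) P →
      MvPolynomial.eval₂ emb ![a, da] Q ≠ 0 := by
    intro Q hQ0 hdegQ h0
    rw [hbridge] at h0
    have h1 : (fun s => MvPolynomial.eval ![y s, δ (y s)] Q) =ᶠ[(U : Filter (Finset T))]
        (fun _ => (0 : K)) :=
      Filter.Germ.coe_eq.mp (h0.trans Filter.Germ.coe_zero.symm)
    have h3 : ∀ᶠ t in (U : Filter (Finset T)), ({⟨Q, hQ0, hdegQ⟩} : Finset T) ≤ t :=
      Filter.eventually_iff.mpr (hUmem ({⟨Q, hQ0, hdegQ⟩} : Finset T))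
    obtain ⟨s, hs1, hs2⟩ := (h1.and h3).exists
    exact hyQ s ⟨Q, hQ0, hdegQ⟩ (Finset.singleton_subset_iff.mp hs2) hs1
  refine ⟨{ L := Filter.Germ (U : Filter (Finset T)) K
            derL := Filter.Germ.map δ
            derL_add := ?_
            derL_mul := ?_
            emb := emb
            emb_der := ?_
            elementary := ?_ }, a, ?_, ?_, ?_⟩
  · intro p q
    refine Filter.Germ.inductionOn₂ p q fun f g => ?_
    rw [← Filter.Germ.coe_add, Filter.Germ.map_coe, Filter.Germ.map_coe, Filter.Germ.map_coe,
      ← Filter.Germ.coe_add]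
    exact congrArg Filter.Germ.ofFun (funext fun x => hδadd (f x) (g x))
  · intro p q
    refine Filter.Germ.inductionOn₂ p q fun f g => ?_
    rw [← Filter.Germ.coe_mul, Filter.Germ.map_coe, Filter.Germ.map_coe, Filter.Germ.map_coe,
      ← Filter.Germ.coe_mul, ← Filter.Germ.coe_mul, ← Filter.Germ.coe_add]
    exact congrArg Filter.Germ.ofFun (funext fun x => hδmul (f x) (g x))
  · intro cc
    rfl
  · intro k φ v
    letI : ∀ _ : Finset T, dLang.Structure K := fun _ => dStructure δ
    rw [dStructure_eq_ultra U δ]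
    have h := @FirstOrder.Language.Ultraproduct.realize_formula_cast (Finset T) (fun _ => K) U
        dLang (fun _ => dStructure δ) (fun _ => inferInstance) (Fin k) φ (fun i _ => v i)
    simp only [Filter.eventually_const] at h
    exact h
  · exact hP0
  · exact hQne
  · intro q hq
    set Q : MvPolynomial (Fin 2) K :=
      Polynomial.eval₂ (MvPolynomial.C : K →+* MvPolynomial (Fin 2) K)
        (MvPolynomial.X (0 : Fin 2)) q with hQdef
    have hψ : (MvPolynomial.eval₂Hom (Polynomial.C : K →+* Polynomial K)
        ![Polynomial.X, 0]) Q = q := by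
      rw [hQdef, Polynomial.hom_eval₂]
      rw [show (MvPolynomial.eval₂Hom (Polynomial.C : K →+* Polynomial K)
            ![Polynomial.X, 0]).comp (MvPolynomial.C : K →+* MvPolynomial (Fin 2) K) =
          (Polynomial.C : K →+* Polynomial K) from RingHom.ext fun r => by simp]
      rw [show (MvPolynomial.eval₂Hom (Polynomial.C : K →+* Polynomial K)
            ![Polynomial.X, 0]) (MvPolynomial.X (0 : Fin 2)) = Polynomial.X by simp]
      exact Polynomial.eval₂_C_X
    have hQ0 : Q ≠ 0 := fun h => hq (by rw [← hψ, h, map_zero])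
    have hsup : Q ∈ MvPolynomial.supported K ({0} : Set (Fin 2)) := by
      rw [MvPolynomial.supported_eq_adjoin_X, Set.image_singleton, hQdef]
      have h3 := Polynomial.aeval_mem_adjoin_singleton (R := K)
        (x := (MvPolynomial.X (0 : Fin 2) : MvPolynomial (Fin 2) K)) (p := q)
      rwa [Polynomial.aeval_def, MvPolynomial.algebraMap_eq] at h3
    have hvars := MvPolynomial.mem_supported.mp hsup
    have h1notin : (1 : Fin 2) ∉ Q.vars := by
      intro hm
      have h4 := hvars hm
      rw [Set.mem_singleton_iff] at h4
      exact absurd h4 (by decide)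
    have hQdeg : MvPolynomial.degreeOf (1 : Fin 2) Q = 0 := by
      rw [MvPolynomial.degreeOf_eq_sup]
      refine Nat.eq_zero_of_le_zero (Finset.sup_le fun d hd => ?_)
      exact le_of_eq (MvPolynomial.mem_support_notMem_vars_zero hd h1notin)
    have hqQ : MvPolynomial.eval₂ emb ![a, da] Q = Polynomial.eval₂ emb a q := by
      rw [hQdef]
      rw [show MvPolynomial.eval₂ emb ![a, da]
            (Polynomial.eval₂ (MvPolynomial.C : K →+* MvPolynomial (Fin 2) K)
              (MvPolynomial.X (0 : Fin 2)) q) =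
          (MvPolynomial.eval₂Hom emb ![a, da])
            (Polynomial.eval₂ (MvPolynomial.C : K →+* MvPolynomial (Fin 2) K)
              (MvPolynomial.X (0 : Fin 2)) q) from rfl]
      rw [Polynomial.hom_eval₂]
      rw [show (MvPolynomial.eval₂Hom emb ![a, da]).comp
            (MvPolynomial.C : K →+* MvPolynomial (Fin 2) K) = emb from
          RingHom.ext fun r => by simp]
      rw [show (MvPolynomial.eval₂Hom emb ![a, da]) (MvPolynomial.X (0 : Fin 2)) = a by simp]
    show Polynomial.eval₂ emb a q ≠ 0
    rw [← hqQ]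
    exact hQne Q hQ0 (by omega)
end
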